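/- arXiv:2302.01658 — 6 statements merged into one kernel-verified Lean document; each statement's English description precedes it below -/
import Mathlib

section
/- Let v ∈ ℓ₂(∨), and for each ν_t ∈ ∨_t and each i ∈ {1,…,d} let Λ^{(i)}_{ν_t} ⊆ ∨₁ be arbitrary subsets; set Λ = ⋃_{ν_t ∈ ∨_t} {ν_t} × Λ^{(1)}_{ν_t} × ⋯ × Λ^{(d)}_{ν_t} ⊆ ∨. Then ‖v − R_Λ v‖_{ℓ₂(∨)} ≤ ( ∑_{ν_t ∈ ∨_t} ∑_{i=1}^d ∑_{μ ∈ ∨₁ \ Λ^{(i)}_{ν_t}} π^{(t,i)}_{ν_t,μ}(v)² )^{1/2}. -/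
open scoped BigOperators

/-- Spatio-temporal contraction `π^{(t,i)}_{ν_t,μ}(v)`. -/
noncomputable def contr {T X : Type*} (d : ℕ) (v : T × (Fin d → X) → ℝ)
    (i : Fin d) (t : T) (μ : X) : ℝ :=
  Real.sqrt (∑' ν : {ν : Fin d → X // ν i = μ}, (v (t, ν.1)) ^ 2)

lemma ofReal_contr_sq {T X : Type*} (d : ℕ) (v : T × (Fin d → X) → ℝ)
    (hv : Summable fun q => (v q) ^ 2) (i : Fin d) (t : T) (μ : X) :
    ENNReal.ofReal ((contr d v i t μ) ^ 2)
      = ∑' ν : {ν : Fin d → X // ν i = μ}, ENNReal.ofReal ((v (t, ν.1)) ^ 2) := by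
  have hinj : Function.Injective
      (fun ν : {ν : Fin d → X // ν i = μ} => ((t, ν.1) : T × (Fin d → X))) := by
    intro a b h
    exact Subtype.ext (congrArg Prod.snd h)
  have hsub : Summable fun ν : {ν : Fin d → X // ν i = μ} => (v (t, ν.1)) ^ 2 :=
    hv.comp_injective hinj
  rw [contr, Real.sq_sqrt (tsum_nonneg fun _ => sq_nonneg _),
    ENNReal.ofReal_tsum_of_nonneg (fun _ => sq_nonneg _) hsub]

/-- the reindexing equivalence -/
def fiberEquiv {X : Type*} {d : ℕ} (i : Fin d) (s : Set X) :
    {ν : Fin d → X // ν i ∉ s} ≃ Σ μ : {μ : X // μ ∉ s}, {ν : Fin d → X // ν i = μ.1} where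
  toFun ν := ⟨⟨ν.1 i, ν.2⟩, ⟨ν.1, rfl⟩⟩
  invFun σ := ⟨σ.2.1, by rw [σ.2.2]; exact σ.1.2⟩
  left_inv ν := rfl
  right_inv σ := by
    rcases σ with ⟨⟨μ, hμ⟩, ⟨ν, hν⟩⟩
    cases hν
    rfl

/-- for index sets `Λ = ⋃_{ν_t} {ν_t} × Λ^{(1)}_{ν_t} × ⋯ × Λ^{(d)}_{ν_t}`, the
restriction error is bounded by the tails of the contractions. -/
theorem restriction_error_le_contractions {T X : Type*} [Countable T] [Countable X]
    (d : ℕ) (hd : 1 ≤ d)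
    (v : T × (Fin d → X) → ℝ) (hv : Summable fun q => (v q) ^ 2)
    (Λs : T → Fin d → Set X) :
    Real.sqrt (∑' q : T × (Fin d → X),
        (v q - Set.indicator {q : T × (Fin d → X) | ∀ i, q.2 i ∈ Λs q.1 i} v q) ^ 2) ≤
      Real.sqrt (∑' t : T, ∑ i : Fin d,
        ∑' μ : {μ : X // μ ∉ Λs t i}, (contr d v i t μ.1) ^ 2) := by
  classical
  apply Real.sqrt_le_sqrt
  set G : T × (Fin d → X) → ENNReal := fun q => ENNReal.ofReal ((v q) ^ 2) with hG
  -- the left-hand ENNReal sum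
  set L : ENNReal := ∑' q : T × (Fin d → X),
      ENNReal.ofReal ((v q - Set.indicator {q : T × (Fin d → X) | ∀ i, q.2 i ∈ Λs q.1 i} v q) ^ 2)
    with hL
  set r : T → Fin d → ENNReal := fun t i =>
      ∑' μ : {μ : X // μ ∉ Λs t i}, ENNReal.ofReal ((contr d v i t μ.1) ^ 2) with hr
  set R : ENNReal := ∑' t : T, ∑ i : Fin d, r t i with hR
  -- rewrite r using fibers
  have hrfib : ∀ t i, r t i = ∑' ν : {ν : Fin d → X // ν i ∉ Λs t i}, G (t, ν.1) := by
    intro t i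
    rw [hr]
    simp only [ofReal_contr_sq d v hv]
    rw [← ENNReal.tsum_sigma (fun (μ : {μ : X // μ ∉ Λs t i}) (ν : {ν : Fin d → X // ν i = μ.1})
      => G (t, ν.1)), ← Equiv.tsum_eq (fiberEquiv i (Λs t i))]
    rfl
  -- total finiteness
  have htot : ∑' q : T × (Fin d → X), G q ≠ ⊤ := by
    rw [hG, ← ENNReal.ofReal_tsum_of_nonneg (fun _ => sq_nonneg _) hv]
    exact ENNReal.ofReal_ne_top
  have hrle : ∀ t i, r t i ≤ ∑' ν : Fin d → X, G (t, ν) := by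
    intro t i
    rw [hrfib]
    exact ENNReal.summable.tsum_le_tsum_of_inj (fun ν => ν.1) Subtype.coe_injective
      (fun _ _ => zero_le) (fun _ => le_rfl) ENNReal.summable
  have hRne : R ≠ ⊤ := by
    have : R ≤ ∑' t : T, ∑ _i : Fin d, ∑' ν : Fin d → X, G (t, ν) := by
      refine ENNReal.tsum_le_tsum fun t => Finset.sum_le_sum fun i _ => hrle t i
    refine ne_top_of_le_ne_top ?_ this
    simp only [Finset.sum_const, Finset.card_univ, Fintype.card_fin, nsmul_eq_mul]
    rw [ENNReal.tsum_mul_left, ← ENNReal.tsum_prod']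
    exact ENNReal.mul_ne_top (ENNReal.natCast_ne_top d) htot
  -- the key ENNReal inequality
  have hmain : L ≤ R := by
    have hLeq : L = ∑' t : T, ∑' ν : Fin d → X,
        (if ∀ i, ν i ∈ Λs t i then 0 else G (t, ν)) := by
      rw [hL, ENNReal.tsum_prod']
      refine tsum_congr fun t => tsum_congr fun ν => ?_
      set q : T × (Fin d → X) := (t, ν) with hq
      by_cases h : ∀ i, q.2 i ∈ Λs q.1 i
      · rw [Set.indicator_of_mem (by exact h : q ∈ {q : T × (Fin d → X) | ∀ i, q.2 i ∈ Λs q.1 i}),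
          if_pos h]
        simp
      · rw [Set.indicator_of_notMem (by exact h : q ∉ {q : T × (Fin d → X) | ∀ i, q.2 i ∈ Λs q.1 i}),
          if_neg h, sub_zero]
    rw [hLeq, hR]
    refine ENNReal.tsum_le_tsum fun t => ?_
    have hpt : ∀ ν : Fin d → X, (if ∀ i, ν i ∈ Λs t i then 0 else G (t, ν))
        ≤ ∑ i : Fin d, Set.indicator {ν : Fin d → X | ν i ∉ Λs t i} (fun ν => G (t, ν)) ν := by
      intro ν
      by_cases h : ∀ i, ν i ∈ Λs t i
      · rw [if_pos h]; exact zero_le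
      · obtain ⟨i, hi⟩ := not_forall.mp h
        rw [if_neg h]
        calc G (t, ν) = Set.indicator {ν : Fin d → X | ν i ∉ Λs t i} (fun ν => G (t, ν)) ν :=
              (Set.indicator_of_mem (show ν ∈ {ν : Fin d → X | ν i ∉ Λs t i} from hi)
                (fun ν => G (t, ν))).symm
          _ ≤ _ := Finset.single_le_sum (f := fun i =>
              Set.indicator {ν : Fin d → X | ν i ∉ Λs t i} (fun ν => G (t, ν)) ν)
              (fun _ _ => zero_le) (Finset.mem_univ i)
    calc ∑' ν : Fin d → X, (if ∀ i, ν i ∈ Λs t i then 0 else G (t, ν))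
        ≤ ∑' ν : Fin d → X, ∑ i : Fin d,
            Set.indicator {ν : Fin d → X | ν i ∉ Λs t i} (fun ν => G (t, ν)) ν :=
          ENNReal.tsum_le_tsum hpt
      _ = ∑ i : Fin d, ∑' ν : Fin d → X,
            Set.indicator {ν : Fin d → X | ν i ∉ Λs t i} (fun ν => G (t, ν)) ν := by
          exact (Summable.tsum_finsetSum fun _ _ => ENNReal.summable)
      _ = ∑ i : Fin d, r t i := by
          refine Finset.sum_congr rfl fun i _ => ?_
          rw [hrfib t i, ← tsum_subtype {ν : Fin d → X | ν i ∉ Λs t i} (fun ν => G (t, ν))]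
          rfl
  -- convert back to reals
  have hLtoReal : (∑' q : T × (Fin d → X),
      (v q - Set.indicator {q : T × (Fin d → X) | ∀ i, q.2 i ∈ Λs q.1 i} v q) ^ 2) = L.toReal := by
    rw [hL, ENNReal.tsum_toReal_eq (fun _ => ENNReal.ofReal_ne_top)]
    exact tsum_congr fun q => (ENNReal.toReal_ofReal (sq_nonneg _)).symm
  have hRtoReal : (∑' t : T, ∑ i : Fin d,
      ∑' μ : {μ : X // μ ∉ Λs t i}, (contr d v i t μ.1) ^ 2) = R.toReal := by
    have hct : ∀ t, (∑ i : Fin d, r t i) ≠ ⊤ := by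
      intro t
      exact ENNReal.ne_top_of_tsum_ne_top hRne t
    rw [hR, ENNReal.tsum_toReal_eq hct]
    refine tsum_congr fun t => ?_
    have hrt : ∀ i ∈ Finset.univ, r t i ≠ ⊤ := fun i _ =>
      (ENNReal.sum_lt_top.mp (hct t).lt_top i (Finset.mem_univ i)).ne
    rw [ENNReal.toReal_sum hrt]
    refine Finset.sum_congr rfl fun i _ => ?_
    rw [hr, ENNReal.tsum_toReal_eq (fun _ => ENNReal.ofReal_ne_top)]
    exact tsum_congr fun μ => (ENNReal.toReal_ofReal (sq_nonneg _)).symm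
  rw [hLtoReal, hRtoReal]
  exact ENNReal.toReal_mono hRne hmain
end

section
/- Let v ∈ ℓ₂(∨), and for each ν_t ∈ ∨_t and each i ∈ {1,…,d} let Λ̂^{(i)}_{ν_t} ⊆ ∨₁ be arbitrary subsets; set Λ̂ = ⋃_{ν_t ∈ ∨_t} {ν_t} × Λ̂^{(1)}_{ν_t} × ⋯ × Λ̂^{(d)}_{ν_t}. Then ( ∑_{ν_t ∈ ∨_t} ∑_{i=1}^d ∑_{μ ∈ ∨₁ \ Λ̂^{(i)}_{ν_t}} π^{(t,i)}_{ν_t,μ}(v)² )^{1/2} ≤ √d · ‖v − R_{Λ̂} v‖_{ℓ₂(∨)}. -/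
open scoped BigOperators

/-- converse bound, the contraction tails are bounded by `√d` times the
restriction error for product-structured index sets. -/
theorem contraction_tails_le_sqrt_d_mul_restriction_error
    {T X : Type*} [Countable T] [Countable X]
    (d : ℕ) (hd : 1 ≤ d)
    (v : T × (Fin d → X) → ℝ) (hv : Summable fun q => (v q) ^ 2)
    (Λs : T → Fin d → Set X) :
    Real.sqrt (∑' t : T, ∑ i : Fin d,
        ∑' μ : {μ : X // μ ∉ Λs t i}, (contr d v i t μ.1) ^ 2) ≤
      Real.sqrt d *
        Real.sqrt (∑' q : T × (Fin d → X),
          (v q - Set.indicator {q : T × (Fin d → X) | ∀ i, q.2 i ∈ Λs q.1 i} v q) ^ 2) := by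
  classical
  set f : T × (Fin d → X) → ℝ := fun q => (v q) ^ 2 with hfdef
  have hf0 : ∀ q, 0 ≤ f q := fun q => sq_nonneg _
  -- the "bad" set
  set S : Set (T × (Fin d → X)) := {q | ∀ i, q.2 i ∈ Λs q.1 i} with hSdef
  have hRHS : ∀ q, (v q - S.indicator v q) ^ 2 = Sᶜ.indicator f q := by
    intro q
    by_cases h : q ∈ S
    · simp [Set.indicator_of_mem h, Set.indicator_of_notMem (by simpa using h : q ∉ Sᶜ)]
    · simp [Set.indicator_of_notMem h, Set.indicator_of_mem (by simpa using h : q ∈ Sᶜ), hfdef]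
  have hSc : Summable (Sᶜ.indicator f) := hv.indicator _
  -- slices are summable
  have hslice : ∀ t : T, Summable fun ν : Fin d → X => f (t, ν) := fun t =>
    hv.comp_injective (fun a b h => by simpa using h)
  -- Step 1: compute the inner tsum for each t, i
  have key : ∀ (t : T) (i : Fin d),
      (∑' μ : {μ : X // μ ∉ Λs t i}, (contr d v i t μ.1) ^ 2)
        = ∑' ν : Fin d → X, Set.indicator {ν : Fin d → X | ν i ∉ Λs t i}
            (fun ν => f (t, ν)) ν := by
    intro t i
    have h1 : ∀ μ : {μ : X // μ ∉ Λs t i},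
        (contr d v i t μ.1) ^ 2 = ∑' ν : {ν : Fin d → X // ν i = μ.1}, f (t, ν.1) := by
      intro μ
      exact Real.sq_sqrt (tsum_nonneg fun ν => sq_nonneg _)
    rw [tsum_congr h1]
    -- equivalence with a sigma type
    have hg : Summable fun σ : Σ μ : {μ : X // μ ∉ Λs t i}, {ν : Fin d → X // ν i = μ.1} =>
        f (t, σ.2.1) := by
      refine (hslice t).comp_injective ?_
      rintro ⟨⟨μ, hμ⟩, ⟨ν, hν⟩⟩ ⟨⟨μ', hμ'⟩, ⟨ν', hν'⟩⟩ hss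
      simp only at hss
      subst hss
      have hmm : μ = μ' := hν.symm.trans hν'
      subst hmm
      rfl
    rw [← hg.tsum_sigma]
    let e : (Σ μ : {μ : X // μ ∉ Λs t i}, {ν : Fin d → X // ν i = μ.1}) ≃
        {ν : Fin d → X | ν i ∉ Λs t i} :=
      { toFun := fun σ => ⟨σ.2.1, fun hc => σ.1.2 (by rwa [σ.2.2] at hc)⟩
        invFun := fun ν => ⟨⟨ν.1 i, ν.2⟩, ⟨ν.1, rfl⟩⟩
        left_inv := by
          rintro ⟨⟨μ, hμ⟩, ⟨ν, hν⟩⟩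
          have hh : ν i = μ := hν
          subst hh
          rfl
        right_inv := fun ν => rfl }
    calc (∑' p : Σ μ : {μ : X // μ ∉ Λs t i}, {ν : Fin d → X // ν i = μ.1}, f (t, p.2.1))
        = ∑' ν : {ν : Fin d → X | ν i ∉ Λs t i}, f (t, ν.1) := by
          rw [← e.tsum_eq (fun ν : {ν : Fin d → X | ν i ∉ Λs t i} => f (t, ν.1))]
          exact tsum_congr fun σ => rfl
      _ = ∑' ν : Fin d → X, Set.indicator {ν : Fin d → X | ν i ∉ Λs t i}
            (fun ν => f (t, ν)) ν :=
          tsum_subtype {ν : Fin d → X | ν i ∉ Λs t i} (fun ν => f (t, ν))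
  -- notation for per-t inner sums
  set g : T → ℝ := fun t => ∑ i : Fin d, ∑' ν : Fin d → X,
      Set.indicator {ν : Fin d → X | ν i ∉ Λs t i} (fun ν => f (t, ν)) ν with hgdef
  set h : T → ℝ := fun t => ∑' ν : Fin d → X,
      Set.indicator {ν : Fin d → X | ∃ j, ν j ∉ Λs t j} (fun ν => f (t, ν)) ν with hhdef
  -- each indicator over product sets, summability over T
  have hQ : ∀ i : Fin d, Summable (Set.indicator {q : T × (Fin d → X) | q.2 i ∉ Λs q.1 i} f) :=
    fun i => hv.indicator _
  have hQslice : ∀ (i : Fin d) (t : T), (∑' ν : Fin d → X,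
      Set.indicator {ν : Fin d → X | ν i ∉ Λs t i} (fun ν => f (t, ν)) ν)
        = ∑' ν : Fin d → X,
          Set.indicator {q : T × (Fin d → X) | q.2 i ∉ Λs q.1 i} f (t, ν) := by
    intro i t
    refine tsum_congr fun ν => ?_
    by_cases hm : ν ∈ {ν : Fin d → X | ν i ∉ Λs t i}
    · rw [Set.indicator_of_mem hm,
        Set.indicator_of_mem (show (t, ν) ∈ {q : T × (Fin d → X) | q.2 i ∉ Λs q.1 i} from hm)]
    · rw [Set.indicator_of_notMem hm,
        Set.indicator_of_notMem
          (show (t, ν) ∉ {q : T × (Fin d → X) | q.2 i ∉ Λs q.1 i} from hm)]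
  have hhslice : ∀ t : T, h t = ∑' ν : Fin d → X, Sᶜ.indicator f (t, ν) := by
    intro t
    refine tsum_congr fun ν => ?_
    have hiff : ((t, ν) ∈ Sᶜ) ↔ ν ∈ {ν : Fin d → X | ∃ j, ν j ∉ Λs t j} := by
      simp [hSdef, Set.mem_setOf_eq, not_forall]
    by_cases hm : ν ∈ {ν : Fin d → X | ∃ j, ν j ∉ Λs t j}
    · rw [Set.indicator_of_mem hm, Set.indicator_of_mem (hiff.mpr hm)]
    · rw [Set.indicator_of_notMem hm, Set.indicator_of_notMem (fun c => hm (hiff.mp c))]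
  -- summability of g and d • h
  have hgsum : Summable g := by
    refine summable_sum fun i _ => ?_
    exact (Summable.prod (hQ i)).congr fun t => hQslice i t
  have hhsum : Summable h := by
    exact (Summable.prod hSc).congr fun t => (hhslice t).symm
  -- pointwise bound g t ≤ d * h t
  have hgh : ∀ t, g t ≤ (d : ℝ) * h t := by
    intro t
    have hterm : ∀ i : Fin d,
        (∑' ν : Fin d → X, Set.indicator {ν : Fin d → X | ν i ∉ Λs t i}
          (fun ν => f (t, ν)) ν) ≤ h t := by
      intro i
      refine Summable.tsum_le_tsum (fun ν => ?_) ?_ ?_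
      · refine Set.indicator_le_indicator_of_subset ?_ (fun ν => hf0 _) _
        intro ν hν
        exact ⟨i, hν⟩
      · exact (hslice t).indicator _
      · exact (hslice t).indicator _
    calc g t ≤ ∑ _i : Fin d, h t := Finset.sum_le_sum fun i _ => hterm i
    _ = (d : ℝ) * h t := by simp [mul_comm]
  -- total inequality at tsum level
  have hA : (∑' t : T, ∑ i : Fin d,
      ∑' μ : {μ : X // μ ∉ Λs t i}, (contr d v i t μ.1) ^ 2)
        ≤ (d : ℝ) * ∑' q : T × (Fin d → X), Sᶜ.indicator f q := by
    have h1 : (∑' t : T, ∑ i : Fin d,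
        ∑' μ : {μ : X // μ ∉ Λs t i}, (contr d v i t μ.1) ^ 2) = ∑' t, g t :=
      tsum_congr fun t => Finset.sum_congr rfl fun i _ => key t i
    rw [h1]
    have h2 : (∑' t, g t) ≤ ∑' t, (d : ℝ) * h t :=
      Summable.tsum_le_tsum hgh hgsum (hhsum.mul_left _)
    have h3 : (∑' t, (d : ℝ) * h t) = (d : ℝ) * ∑' t, h t := tsum_mul_left
    have h4 : (∑' t, h t) = ∑' q : T × (Fin d → X), Sᶜ.indicator f q := by
      rw [hSc.tsum_prod]
      exact tsum_congr fun t => hhslice t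
    calc (∑' t, g t) ≤ ∑' t, (d : ℝ) * h t := h2
      _ = (d : ℝ) * ∑' t, h t := h3
      _ = (d : ℝ) * ∑' q : T × (Fin d → X), Sᶜ.indicator f q := by rw [h4]
  -- wrap up with sqrt
  have hrw : (∑' q : T × (Fin d → X), (v q - S.indicator v q) ^ 2)
      = ∑' q : T × (Fin d → X), Sᶜ.indicator f q := tsum_congr hRHS
  calc Real.sqrt (∑' t : T, ∑ i : Fin d,
        ∑' μ : {μ : X // μ ∉ Λs t i}, (contr d v i t μ.1) ^ 2)
      ≤ Real.sqrt ((d : ℝ) * ∑' q : T × (Fin d → X), Sᶜ.indicator f q) :=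
        Real.sqrt_le_sqrt hA
    _ = Real.sqrt d * Real.sqrt (∑' q : T × (Fin d → X), Sᶜ.indicator f q) :=
        Real.sqrt_mul (by positivity) _
    _ = Real.sqrt d * Real.sqrt (∑' q : T × (Fin d → X),
          (v q - S.indicator v q) ^ 2) := by
        rw [hrw]
end

section
/- For all real a > 0 and s > 0, the improper integral converges and ∫₀^∞ (π y)^{−1/2} ( 1 − 2 a^{1/4} √y · F(a^{1/4} √y) ) e^{−ys} dy = √s / ( s + √a ). -/
open MeasureTheory

/-- The Dawson function `F(x) = e^{−x²} ∫₀ˣ e^{t²} dt`. -/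
noncomputable def dawson (x : ℝ) : ℝ := Real.exp (-x ^ 2) * ∫ t in (0 : ℝ)..x, Real.exp (t ^ 2)

lemma hasDerivAt_dawson (x : ℝ) : HasDerivAt dawson (1 - 2 * x * dawson x) x := by
  have hc : Continuous fun t : ℝ => Real.exp (t ^ 2) :=
    Real.continuous_exp.comp (continuous_pow 2)
  have hP : HasDerivAt (fun u : ℝ => ∫ t in (0:ℝ)..u, Real.exp (t ^ 2))
      (Real.exp (x ^ 2)) x :=
    intervalIntegral.integral_hasDerivAt_right (hc.intervalIntegrable _ _)
      (hc.stronglyMeasurableAtFilter _ _) hc.continuousAt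
  have h1 : HasDerivAt (fun u : ℝ => -u ^ 2) (-(2 * x)) x := by
    simpa using (hasDerivAt_pow 2 x).fun_neg
  have he : HasDerivAt (fun u : ℝ => Real.exp (-u ^ 2))
      (Real.exp (-x ^ 2) * -(2 * x)) x := h1.exp
  have hmul := he.fun_mul hP
  have hexp : Real.exp (-x ^ 2) * Real.exp (x ^ 2) = 1 := by
    rw [← Real.exp_add]; simp
  refine hmul.congr_deriv ?_
  simp only [dawson]
  ring_nf
  nlinarith [hexp]

lemma continuous_dawson : Continuous dawson :=
  continuous_iff_continuousAt.2 fun x => (hasDerivAt_dawson x).continuousAt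

lemma dawson_zero : dawson 0 = 0 := by simp [dawson]

lemma dawson_nonneg {x : ℝ} (hx : 0 ≤ x) : 0 ≤ dawson x :=
  mul_nonneg (Real.exp_pos _).le
    (intervalIntegral.integral_nonneg hx fun t _ => (Real.exp_pos _).le)

lemma mul_dawson_le {x : ℝ} (hx : 0 ≤ x) : x * dawson x ≤ 1 := by
  rcases eq_or_lt_of_le hx with h | h
  · simp [← h]
  have hc : Continuous fun t : ℝ => Real.exp (t ^ 2) :=
    Real.continuous_exp.comp (continuous_pow 2)
  have hc2 : Continuous fun t : ℝ => Real.exp (x * t) :=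
    Real.continuous_exp.comp (continuous_const.mul continuous_id)
  have hint : (∫ t in (0:ℝ)..x, Real.exp (t ^ 2)) ≤ ∫ t in (0:ℝ)..x, Real.exp (x * t) := by
    apply intervalIntegral.integral_mono_on hx (hc.intervalIntegrable _ _)
      (hc2.intervalIntegrable _ _)
    intro t ht
    exact Real.exp_le_exp.2 (by nlinarith [ht.1, ht.2])
  have hval : (∫ t in (0:ℝ)..x, Real.exp (x * t)) = x⁻¹ * (Real.exp (x * x) - 1) := by
    rw [intervalIntegral.integral_comp_mul_left (fun t => Real.exp t) h.ne']
    simp [integral_exp, smul_eq_mul]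
  have hkey : x * dawson x ≤ x * (Real.exp (-x ^ 2) * (x⁻¹ * (Real.exp (x * x) - 1))) := by
    have := hint.trans_eq hval
    have h2 : dawson x ≤ Real.exp (-x ^ 2) * (x⁻¹ * (Real.exp (x * x) - 1)) :=
      mul_le_mul_of_nonneg_left this (Real.exp_pos _).le
    exact mul_le_mul_of_nonneg_left h2 hx
  have hexp : Real.exp (-x ^ 2) * Real.exp (x ^ 2) = 1 := by rw [← Real.exp_add]; simp
  have hxx : Real.exp (x * x) = Real.exp (x ^ 2) := by ring_nf
  rw [hxx] at hkey
  calc x * dawson x ≤ x * (Real.exp (-x ^ 2) * (x⁻¹ * (Real.exp (x ^ 2) - 1))) := hkey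
    _ = 1 - Real.exp (-x ^ 2) := by field_simp; nlinarith [hexp]
    _ ≤ 1 := by nlinarith [Real.exp_pos (-x ^ 2)]

lemma dawson_le_one {x : ℝ} (hx : 0 ≤ x) : dawson x ≤ 1 := by
  have h1 : dawson x ≤ x := by
    have hc : Continuous fun t : ℝ => Real.exp (t ^ 2) :=
      Real.continuous_exp.comp (continuous_pow 2)
    have hint : (∫ t in (0:ℝ)..x, Real.exp (t ^ 2)) ≤ ∫ t in (0:ℝ)..x, Real.exp (x ^ 2) := by
      apply intervalIntegral.integral_mono_on hx (hc.intervalIntegrable _ _)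
        (intervalIntegrable_const)
      intro t ht
      exact Real.exp_le_exp.2 (by nlinarith [ht.1, ht.2])
    have hval : (∫ t in (0:ℝ)..x, (Real.exp (x ^ 2) : ℝ)) = x * Real.exp (x ^ 2) := by
      simp [mul_comm]
    have hexp : Real.exp (-x ^ 2) * Real.exp (x ^ 2) = 1 := by rw [← Real.exp_add]; simp
    have := mul_le_mul_of_nonneg_left (hint.trans_eq hval) (Real.exp_pos (-x ^ 2)).le
    calc dawson x ≤ Real.exp (-x ^ 2) * (x * Real.exp (x ^ 2)) := this
      _ = x := by nlinarith [hexp]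
  nlinarith [mul_dawson_le hx, dawson_nonneg hx]

lemma abs_dawson_deriv_le {x : ℝ} (hx : 0 ≤ x) : |1 - 2 * x * dawson x| ≤ 1 :=
  abs_le.2 ⟨by nlinarith [mul_dawson_le hx], by nlinarith [dawson_nonneg hx, hx]⟩
/-- for `a, s > 0`,
`∫₀^∞ (π y)^{−1/2} (1 − 2 a^{1/4} √y F(a^{1/4} √y)) e^{−ys} dy = √s / (s + √a)`. -/
theorem integral_rep_scaling (a s : ℝ) (ha : 0 < a) (hs : 0 < s) :
    IntegrableOn
      (fun y : ℝ => (Real.pi * y) ^ (-(1 : ℝ) / 2) *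
        (1 - 2 * a ^ ((1 : ℝ) / 4) * Real.sqrt y * dawson (a ^ ((1 : ℝ) / 4) * Real.sqrt y)) *
        Real.exp (-(y * s))) (Set.Ioi 0) ∧
      ∫ y in Set.Ioi (0 : ℝ), (Real.pi * y) ^ (-(1 : ℝ) / 2) *
        (1 - 2 * a ^ ((1 : ℝ) / 4) * Real.sqrt y * dawson (a ^ ((1 : ℝ) / 4) * Real.sqrt y)) *
        Real.exp (-(y * s)) = Real.sqrt s / (s + Real.sqrt a) := by
  have hπ : (0:ℝ) < Real.pi := Real.pi_pos
  have hsqπ : (0:ℝ) < Real.sqrt Real.pi := Real.sqrt_pos.2 hπ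
  set b : ℝ := a ^ ((1:ℝ)/4) with hbdef
  have hb : 0 < b := Real.rpow_pos_of_pos ha _
  have hb2 : b ^ 2 = Real.sqrt a := by
    rw [hbdef, ← Real.rpow_natCast (a ^ ((1:ℝ)/4)) 2, ← Real.rpow_mul ha.le,
      Real.sqrt_eq_rpow]
    norm_num
  set f : ℝ → ℝ := fun y : ℝ => (Real.pi * y) ^ (-(1 : ℝ) / 2) *
        (1 - 2 * b * Real.sqrt y * dawson (b * Real.sqrt y)) *
        Real.exp (-(y * s)) with hfdef
  set g : ℝ → ℝ := fun x => (1 - 2 * b * x * dawson (b * x)) * Real.exp (-s * x ^ 2) with hgdef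
  -- pointwise identity for the substitution y = x^2
  have hpt : ∀ x ∈ Set.Ioi (0:ℝ),
      (|(2:ℝ)| * x ^ ((2:ℝ) - 1)) • f (x ^ (2:ℝ)) = (2 / Real.sqrt Real.pi) * g x := by
    intro x hx
    have hx0 : (0:ℝ) < x := hx
    have hx2 : x ^ ((2:ℝ)) = x ^ 2 := by
      rw [← Real.rpow_natCast x 2]; norm_num
    have hx1 : x ^ ((2:ℝ) - 1) = x := by
      norm_num
    have hsq : Real.sqrt (x ^ 2) = x := Real.sqrt_sq hx0.le
    have hrw : (Real.pi * x ^ 2) ^ (-(1:ℝ)/2) = (Real.sqrt Real.pi * x)⁻¹ := by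
      rw [neg_div, Real.rpow_neg (le_of_lt (mul_pos hπ (pow_pos hx0 2))), ← Real.sqrt_eq_rpow,
        Real.sqrt_mul hπ.le, Real.sqrt_sq hx0.le]
    rw [hx2, hx1]
    simp only [hfdef, hgdef, smul_eq_mul, hsq, hrw, abs_two]
    have hex : Real.exp (-(x ^ 2 * s)) = Real.exp (-s * x ^ 2) := by ring_nf
    rw [hex]
    field_simp
  -- continuity
  have contbx : Continuous fun x : ℝ => b * x := continuous_const.mul continuous_id
  have conte : Continuous fun x : ℝ => Real.exp (-s * x ^ 2) :=
    Real.continuous_exp.comp (continuous_const.mul (continuous_pow 2))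
  have cont_g : Continuous g := by
    apply Continuous.mul _ conte
    exact continuous_const.sub
      (((continuous_const.mul continuous_id)).mul (continuous_dawson.comp contbx))
  have cont_L : Continuous fun x : ℝ => x * dawson (b * x) * Real.exp (-s * x ^ 2) :=
    (continuous_id.mul (continuous_dawson.comp contbx)).mul conte
  -- integrability of g and of x * dawson(bx) * exp
  have hg_int : IntegrableOn g (Set.Ioi 0) := by
    apply Integrable.mono' ((integrable_exp_neg_mul_sq hs).integrableOn)
      cont_g.aestronglyMeasurable.restrict
    rw [ae_restrict_iff' measurableSet_Ioi]
    refine ae_of_all _ fun x hx => ?_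
    have hx0 : (0:ℝ) < x := hx
    have hbx : (0:ℝ) ≤ b * x := by positivity
    have h1 : |1 - 2 * b * x * dawson (b * x)| ≤ 1 := by
      have := abs_dawson_deriv_le hbx
      rw [show 2 * b * x = 2 * (b * x) by ring]
      exact this
    simp only [hgdef, Real.norm_eq_abs, abs_mul, Real.abs_exp]
    calc |1 - 2 * b * x * dawson (b * x)| * Real.exp (-s * x ^ 2)
        ≤ 1 * Real.exp (-s * x ^ 2) :=
          mul_le_mul_of_nonneg_right h1 (Real.exp_pos _).le
      _ = Real.exp (-s * x ^ 2) := one_mul _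
  have hL_int : IntegrableOn (fun x : ℝ => x * dawson (b * x) * Real.exp (-s * x ^ 2))
      (Set.Ioi 0) := by
    apply Integrable.mono' ((integrable_mul_exp_neg_mul_sq hs).integrableOn)
      cont_L.aestronglyMeasurable.restrict
    rw [ae_restrict_iff' measurableSet_Ioi]
    refine ae_of_all _ fun x hx => ?_
    have hx0 : (0:ℝ) < x := hx
    have hbx : (0:ℝ) ≤ b * x := by positivity
    have h1 : |dawson (b * x)| ≤ 1 :=
      abs_le.2 ⟨by nlinarith [dawson_nonneg hbx], dawson_le_one hbx⟩
    simp only [Real.norm_eq_abs, abs_mul, Real.abs_exp, abs_of_pos hx0]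
    calc x * |dawson (b * x)| * Real.exp (-s * x ^ 2)
        ≤ x * 1 * Real.exp (-s * x ^ 2) := by
          apply mul_le_mul_of_nonneg_right _ (Real.exp_pos _).le
          exact mul_le_mul_of_nonneg_left h1 hx0.le
      _ = x * Real.exp (-s * x ^ 2) := by ring
  -- FTC for G = dawson(bx) * exp(-s x^2)
  set G : ℝ → ℝ := fun x => dawson (b * x) * Real.exp (-s * x ^ 2) with hGdef
  have hG : ∀ x : ℝ, HasDerivAt G
      (b * g x + (-(2*s)) * (x * dawson (b * x) * Real.exp (-s * x ^ 2))) x := by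
    intro x
    have hlin : HasDerivAt (fun u : ℝ => b * u) b x := by
      simpa using (hasDerivAt_id x).const_mul b
    have h1 : HasDerivAt (fun u : ℝ => dawson (b * u))
        ((1 - 2 * (b * x) * dawson (b * x)) * b) x :=
      (hasDerivAt_dawson (b * x)).comp x hlin
    have hp : HasDerivAt (fun u : ℝ => -s * u ^ 2) (-s * (2 * x)) x := by
      have := (hasDerivAt_pow 2 x).const_mul (-s)
      simpa using this
    have h2 : HasDerivAt (fun u : ℝ => Real.exp (-s * u ^ 2))
        (Real.exp (-s * x ^ 2) * (-s * (2 * x))) x := hp.exp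
    have := h1.fun_mul h2
    refine this.congr_deriv ?_
    simp only [hgdef]
    ring
  have hD_int : IntegrableOn
      (fun x : ℝ => b * g x + (-(2*s)) * (x * dawson (b * x) * Real.exp (-s * x ^ 2)))
      (Set.Ioi 0) := (hg_int.const_mul b).add (hL_int.const_mul _)
  have hGtop : Filter.Tendsto G Filter.atTop (nhds 0) := by
    have h0 : Filter.Tendsto (fun x : ℝ => Real.exp (-s * x ^ 2)) Filter.atTop (nhds 0) := by
      apply Real.tendsto_exp_atBot.comp
      have h1 : Filter.Tendsto (fun x : ℝ => x ^ 2) Filter.atTop Filter.atTop :=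
        Filter.tendsto_pow_atTop two_ne_zero
      have h2 : Filter.Tendsto (fun x : ℝ => s * x ^ 2) Filter.atTop Filter.atTop :=
        h1.const_mul_atTop hs
      have h3 : Filter.Tendsto (fun x : ℝ => -(s * x ^ 2)) Filter.atTop Filter.atBot :=
        Filter.tendsto_neg_atBot_iff.2 h2
      simpa [neg_mul, Function.comp] using h3
    apply squeeze_zero'
    · filter_upwards [Filter.eventually_ge_atTop (0:ℝ)] with x hx
      exact mul_nonneg (dawson_nonneg (by positivity)) (Real.exp_pos _).le
    · filter_upwards [Filter.eventually_ge_atTop (0:ℝ)] with x hx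
      calc G x ≤ 1 * Real.exp (-s * x ^ 2) :=
            mul_le_mul_of_nonneg_right (dawson_le_one (by positivity)) (Real.exp_pos _).le
        _ = Real.exp (-s * x ^ 2) := one_mul _
    · exact h0
  have hFTC : ∫ x in Set.Ioi (0:ℝ),
      (b * g x + (-(2*s)) * (x * dawson (b * x) * Real.exp (-s * x ^ 2))) = 0 - G 0 :=
    MeasureTheory.integral_Ioi_of_hasDerivAt_of_tendsto' (fun x _ => hG x) hD_int hGtop
  have hG0 : G 0 = 0 := by simp [hGdef, dawson_zero]
  set K : ℝ := ∫ x in Set.Ioi (0:ℝ), g x with hKdef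
  set L : ℝ := ∫ x in Set.Ioi (0:ℝ), x * dawson (b * x) * Real.exp (-s * x ^ 2) with hLdef
  have hsplit : b * K + (-(2*s)) * L = 0 := by
    rw [hG0, sub_zero] at hFTC
    rw [hKdef, hLdef, ← MeasureTheory.integral_const_mul, ← MeasureTheory.integral_const_mul,
      ← integral_add (hg_int.const_mul b) (hL_int.const_mul _)]
    exact hFTC
  have hKsplit : K = Real.sqrt (Real.pi / s) / 2 - 2 * b * L := by
    have hgeq : ∀ x : ℝ, g x = Real.exp (-s * x ^ 2)
        - (2 * b) * (x * dawson (b * x) * Real.exp (-s * x ^ 2)) := by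
      intro x; simp only [hgdef]; ring
    rw [hKdef]
    calc (∫ x in Set.Ioi (0:ℝ), g x)
        = ∫ x in Set.Ioi (0:ℝ), (Real.exp (-s * x ^ 2)
            - (2 * b) * (x * dawson (b * x) * Real.exp (-s * x ^ 2))) := by
          exact integral_congr_ae (Filter.Eventually.of_forall fun x => hgeq x)
      _ = (∫ x in Set.Ioi (0:ℝ), Real.exp (-s * x ^ 2))
            - ∫ x in Set.Ioi (0:ℝ), (2 * b) * (x * dawson (b * x) * Real.exp (-s * x ^ 2)) :=
          integral_sub ((integrable_exp_neg_mul_sq hs).integrableOn) (hL_int.const_mul _)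
      _ = Real.sqrt (Real.pi / s) / 2 - 2 * b * L := by
          rw [integral_gaussian_Ioi, MeasureTheory.integral_const_mul]
  -- solve for K
  have hsb : (0:ℝ) < s + b ^ 2 := by positivity
  have hKval : K = Real.sqrt (Real.pi / s) / 2 * s / (s + b ^ 2) := by
    have hL : L = b * K / (2 * s) := by
      field_simp
      linarith [hsplit]
    rw [hL] at hKsplit
    field_simp at hKsplit ⊢
    nlinarith [hKsplit]
  -- substitution
  have hsub : (∫ x in Set.Ioi (0:ℝ), (|(2:ℝ)| * x ^ ((2:ℝ) - 1)) • f (x ^ (2:ℝ)))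
      = ∫ y in Set.Ioi (0:ℝ), f y :=
    MeasureTheory.integral_comp_rpow_Ioi f two_ne_zero
  have hint_f : IntegrableOn f (Set.Ioi 0) := by
    rw [← MeasureTheory.integrableOn_Ioi_comp_rpow_iff f (two_ne_zero (α := ℝ))]
    exact MeasureTheory.IntegrableOn.congr_fun (hg_int.const_mul (2 / Real.sqrt Real.pi))
      (fun x hx => (hpt x hx).symm) measurableSet_Ioi
  have hval : (∫ y in Set.Ioi (0:ℝ), f y) = 2 / Real.sqrt Real.pi * K := by
    rw [← hsub, MeasureTheory.setIntegral_congr_fun measurableSet_Ioi hpt,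
      MeasureTheory.integral_const_mul, hKdef]
  refine ⟨hint_f, ?_⟩
  rw [hval, hKval, hb2]
  have hps : Real.sqrt (Real.pi / s) = Real.sqrt Real.pi / Real.sqrt s :=
    Real.sqrt_div hπ.le s
  have hss : Real.sqrt s * Real.sqrt s = s := Real.mul_self_sqrt hs.le
  have hsqs : (0:ℝ) < Real.sqrt s := Real.sqrt_pos.2 hs
  have hsa : (0:ℝ) < s + Real.sqrt a := by positivity
  rw [hps]
  have hfin : 2 / Real.sqrt Real.pi *
      (Real.sqrt Real.pi / Real.sqrt s / 2 * s / (s + Real.sqrt a)) =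
      (s / Real.sqrt s) / (s + Real.sqrt a) := by
    field_simp
  rw [hfin, Real.div_sqrt]
end

section
/- For all real c > 0 and X ∈ ℝ, the improper integral converges and ∫_X^∞ ( 1 − 2 e^{x/2} F(e^{x/2}) ) e^{x/2 − c eˣ} dx = √π · (√c/(c+1)) · erfc(√c · e^{X/2}) − (2/(c+1)) · e^{−c e^X} · F(e^{X/2}). -/
open MeasureTheory

/-- The error function `erf(x) = (2/√π) ∫₀ˣ e^{−t²} dt`. -/
noncomputable def erf (x : ℝ) : ℝ := 2 / Real.sqrt Real.pi * ∫ t in (0 : ℝ)..x, Real.exp (-t ^ 2)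

/-- The complementary error function. -/
noncomputable def erfc (x : ℝ) : ℝ := 1 - erf x

lemma hasDerivAt_erf (x : ℝ) : HasDerivAt erf (2 / Real.sqrt Real.pi * Real.exp (-x ^ 2)) x := by
  have hcont : Continuous fun t : ℝ => Real.exp (-t ^ 2) := by continuity
  have hI : HasDerivAt (fun u : ℝ => ∫ t in (0:ℝ)..u, Real.exp (-t ^ 2)) (Real.exp (-x ^ 2)) x :=
    intervalIntegral.integral_hasDerivAt_right (hcont.intervalIntegrable 0 x)
      (hcont.stronglyMeasurable.stronglyMeasurableAtFilter) hcont.continuousAt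
  exact hI.const_mul _

lemma dawson_nonneg_s11 {t : ℝ} (ht : 0 ≤ t) : 0 ≤ dawson t := by
  unfold dawson
  refine mul_nonneg (Real.exp_pos _).le ?_
  exact intervalIntegral.integral_nonneg ht fun s _ => (Real.exp_pos _).le

lemma dawson_le_self {t : ℝ} (ht : 0 ≤ t) : dawson t ≤ t := by
  unfold dawson
  have hcont : Continuous fun s : ℝ => Real.exp (s ^ 2) := by continuity
  have hb : (∫ s in (0:ℝ)..t, Real.exp (s ^ 2)) ≤ ∫ s in (0:ℝ)..t, Real.exp (t ^ 2) := by
    apply intervalIntegral.integral_mono_on ht (hcont.intervalIntegrable 0 t)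
      (intervalIntegrable_const)
    intro s hs
    exact Real.exp_le_exp.mpr (by nlinarith [hs.1, hs.2])
  calc Real.exp (-t ^ 2) * ∫ s in (0:ℝ)..t, Real.exp (s ^ 2)
      ≤ Real.exp (-t ^ 2) * ∫ s in (0:ℝ)..t, Real.exp (t ^ 2) := by
        exact mul_le_mul_of_nonneg_left hb (Real.exp_pos _).le
    _ = t := by
        rw [intervalIntegral.integral_const, smul_eq_mul, sub_zero, ← mul_assoc,
          mul_comm (Real.exp (-t^2)) t, mul_assoc, ← Real.exp_add]
        simp

-- derivative of exp (x/2)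
lemma hasDerivAt_u (x : ℝ) : HasDerivAt (fun x : ℝ => Real.exp (x / 2))
    (Real.exp (x / 2) * (1 / 2)) x := by
  have h : HasDerivAt (fun x : ℝ => x / 2) (1 / 2) x := (hasDerivAt_id x).div_const 2
  simpa using h.exp

lemma exp_half_sq (x : ℝ) : Real.exp (x / 2) ^ 2 = Real.exp x := by
  rw [sq, ← Real.exp_add]; ring_nf

lemma hasDerivAt_G (c : ℝ) (hc : 0 < c) (x : ℝ) :
    HasDerivAt (fun x : ℝ => 2 / (c + 1) * (Real.exp (-(c * Real.exp x)) * dawson (Real.exp (x / 2)))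
        + Real.sqrt Real.pi * (Real.sqrt c / (c + 1)) * erf (Real.sqrt c * Real.exp (x / 2)))
      ((1 - 2 * Real.exp (x / 2) * dawson (Real.exp (x / 2))) * Real.exp (x / 2 - c * Real.exp x)) x := by
  have hv : HasDerivAt (fun x : ℝ => Real.exp x) (Real.exp x) x := Real.hasDerivAt_exp x
  have h1 : HasDerivAt (fun x : ℝ => Real.exp (-(c * Real.exp x)))
      (Real.exp (-(c * Real.exp x)) * -(c * Real.exp x)) x := ((hv.const_mul c).neg).exp
  have h2 : HasDerivAt (fun x : ℝ => dawson (Real.exp (x / 2)))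
      ((1 - 2 * Real.exp (x / 2) * dawson (Real.exp (x / 2))) * (Real.exp (x / 2) * (1 / 2))) x :=
    (hasDerivAt_dawson _).comp x (hasDerivAt_u x)
  have h3 : HasDerivAt (fun x : ℝ => erf (Real.sqrt c * Real.exp (x / 2)))
      (2 / Real.sqrt Real.pi * Real.exp (-(Real.sqrt c * Real.exp (x / 2)) ^ 2) *
        (Real.sqrt c * (Real.exp (x / 2) * (1 / 2)))) x :=
    (hasDerivAt_erf _).comp x ((hasDerivAt_u x).const_mul (Real.sqrt c))
  have h := ((h1.mul h2).const_mul (2 / (c + 1))).add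
    (h3.const_mul (Real.sqrt Real.pi * (Real.sqrt c / (c + 1))))
  refine h.congr_deriv ?_
  symm
  have hsq : (Real.sqrt c * Real.exp (x / 2)) ^ 2 = c * Real.exp x := by
    rw [mul_pow, Real.sq_sqrt hc.le, exp_half_sq]
  rw [hsq]
  have hsplit : Real.exp (x / 2 - c * Real.exp x)
      = Real.exp (x / 2) * Real.exp (-(c * Real.exp x)) := by
    rw [← Real.exp_add]; ring_nf
  rw [hsplit]
  have hpi : Real.sqrt Real.pi ≠ 0 := by positivity
  have hc1 : c + 1 ≠ 0 := by positivity
  have hcc : Real.sqrt c * Real.sqrt c = c := Real.mul_self_sqrt hc.le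
  have hex : Real.exp (x / 2) * Real.exp (x / 2) = Real.exp x := by
    rw [← Real.exp_add]; ring_nf
  rw [← hex]
  field_simp
  linear_combination (-1:ℝ) * hcc

lemma hasDerivAt_H (c : ℝ) (hc : 0 < c) (x : ℝ) :
    HasDerivAt (fun x : ℝ => Real.sqrt Real.pi / Real.sqrt c * erf (Real.sqrt c * Real.exp (x / 2)))
      (Real.exp (x / 2 - c * Real.exp x)) x := by
  have h3 : HasDerivAt (fun x : ℝ => erf (Real.sqrt c * Real.exp (x / 2)))
      (2 / Real.sqrt Real.pi * Real.exp (-(Real.sqrt c * Real.exp (x / 2)) ^ 2) *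
        (Real.sqrt c * (Real.exp (x / 2) * (1 / 2)))) x :=
    (hasDerivAt_erf _).comp x ((hasDerivAt_u x).const_mul (Real.sqrt c))
  have h := h3.const_mul (Real.sqrt Real.pi / Real.sqrt c)
  refine h.congr_deriv ?_
  symm
  have hsq : (Real.sqrt c * Real.exp (x / 2)) ^ 2 = c * Real.exp x := by
    rw [mul_pow, Real.sq_sqrt hc.le, exp_half_sq]
  rw [hsq]
  have hsplit : Real.exp (x / 2 - c * Real.exp x)
      = Real.exp (x / 2) * Real.exp (-(c * Real.exp x)) := by
    rw [← Real.exp_add]; ring_nf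
  rw [hsplit]
  have hpi : Real.sqrt Real.pi ≠ 0 := by positivity
  have hcs : Real.sqrt c ≠ 0 := by positivity
  field_simp

lemma tendsto_exp_half_atTop : Filter.Tendsto (fun x : ℝ => Real.exp (x / 2))
    Filter.atTop Filter.atTop :=
  Real.tendsto_exp_atTop.comp (Filter.tendsto_id.atTop_div_const two_pos)

lemma tendsto_g1 (c : ℝ) (hc : 0 < c) :
    Filter.Tendsto (fun x : ℝ => Real.exp (x / 2 - c * Real.exp x)) Filter.atTop (nhds 0) := by
  have hbase : Filter.Tendsto
      (fun x : ℝ => (1 / c) * ((c * Real.exp (x / 2)) ^ 1 * Real.exp (-(c * Real.exp (x / 2)))))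
      Filter.atTop (nhds 0) := by
    have h1 := (Real.tendsto_pow_mul_exp_neg_atTop_nhds_zero 1).comp
      (tendsto_exp_half_atTop.const_mul_atTop hc)
    simpa using h1.const_mul (1 / c)
  refine squeeze_zero' ?_ ?_ hbase
  · filter_upwards with x using (Real.exp_pos _).le
  · filter_upwards [Filter.eventually_ge_atTop 0] with x hx
    have hu : 1 ≤ Real.exp (x / 2) := Real.one_le_exp (by linarith)
    have hle : x / 2 - c * Real.exp x ≤ x / 2 - c * Real.exp (x / 2) := by
      have h2 : Real.exp (x / 2) ≤ Real.exp x := Real.exp_le_exp.mpr (by linarith)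
      nlinarith
    calc Real.exp (x / 2 - c * Real.exp x) ≤ Real.exp (x / 2 - c * Real.exp (x / 2)) :=
          Real.exp_le_exp.mpr hle
      _ = (1 / c) * ((c * Real.exp (x / 2)) ^ 1 * Real.exp (-(c * Real.exp (x / 2)))) := by
          rw [pow_one, show x / 2 - c * Real.exp (x / 2)
            = x / 2 + -(c * Real.exp (x / 2)) by ring, Real.exp_add]
          field_simp

lemma tendsto_A (c : ℝ) (hc : 0 < c) :
    Filter.Tendsto (fun x : ℝ => Real.exp (-(c * Real.exp x)) * dawson (Real.exp (x / 2)))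
      Filter.atTop (nhds 0) := by
  refine squeeze_zero' ?_ ?_ (tendsto_g1 c hc)
  · filter_upwards with x using
      mul_nonneg (Real.exp_pos _).le (dawson_nonneg_s11 (Real.exp_pos _).le)
  · filter_upwards with x
    have hd := dawson_le_self (Real.exp_pos (x / 2)).le
    calc Real.exp (-(c * Real.exp x)) * dawson (Real.exp (x / 2))
        ≤ Real.exp (-(c * Real.exp x)) * Real.exp (x / 2) :=
          mul_le_mul_of_nonneg_left hd (Real.exp_pos _).le
      _ = Real.exp (x / 2 - c * Real.exp x) := by
          rw [show x / 2 - c * Real.exp x = x / 2 + -(c * Real.exp x) by ring, Real.exp_add]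
          ring

lemma tendsto_erf_atTop : Filter.Tendsto erf Filter.atTop (nhds 1) := by
  have hint : IntegrableOn (fun t : ℝ => Real.exp (-t ^ 2)) (Set.Ioi 0) := by
    have h := (integrable_exp_neg_mul_sq one_pos).integrableOn (s := Set.Ioi (0:ℝ))
    simpa using h
  have h0 := intervalIntegral_tendsto_integral_Ioi 0 hint Filter.tendsto_id
  have hval : (∫ t in Set.Ioi (0:ℝ), Real.exp (-t ^ 2)) = Real.sqrt Real.pi / 2 := by
    have h := integral_gaussian_Ioi 1
    simpa using h
  rw [hval] at h0
  have hpi : Real.sqrt Real.pi ≠ 0 := by positivity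
  have h1 := h0.const_mul (2 / Real.sqrt Real.pi)
  have h2 : 2 / Real.sqrt Real.pi * (Real.sqrt Real.pi / 2) = 1 := by field_simp
  rw [h2] at h1
  exact h1

/-- upper-tail integral identity for all `c > 0`, `X ∈ ℝ`. -/
theorem upper_tail_integral (c X : ℝ) (hc : 0 < c) :
    IntegrableOn
      (fun x : ℝ => (1 - 2 * Real.exp (x / 2) * dawson (Real.exp (x / 2))) *
        Real.exp (x / 2 - c * Real.exp x)) (Set.Ioi X) ∧
      ∫ x in Set.Ioi X, (1 - 2 * Real.exp (x / 2) * dawson (Real.exp (x / 2))) *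
          Real.exp (x / 2 - c * Real.exp x)
        = Real.sqrt Real.pi * (Real.sqrt c / (c + 1)) * erfc (Real.sqrt c * Real.exp (X / 2))
            - 2 / (c + 1) * Real.exp (-(c * Real.exp X)) * dawson (Real.exp (X / 2)) := by
  have hG := hasDerivAt_G c hc
  have hH := hasDerivAt_H c hc
  have herfc : Filter.Tendsto (fun x : ℝ => erf (Real.sqrt c * Real.exp (x / 2)))
      Filter.atTop (nhds 1) :=
    tendsto_erf_atTop.comp (tendsto_exp_half_atTop.const_mul_atTop (Real.sqrt_pos.mpr hc))
  have hGlim : Filter.Tendsto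
      (fun x : ℝ => 2 / (c + 1) * (Real.exp (-(c * Real.exp x)) * dawson (Real.exp (x / 2)))
        + Real.sqrt Real.pi * (Real.sqrt c / (c + 1)) * erf (Real.sqrt c * Real.exp (x / 2)))
      Filter.atTop (nhds (Real.sqrt Real.pi * (Real.sqrt c / (c + 1)))) := by
    have h := ((tendsto_A c hc).const_mul (2 / (c + 1))).add
      (herfc.const_mul (Real.sqrt Real.pi * (Real.sqrt c / (c + 1))))
    simpa using h
  have hHlim : Filter.Tendsto
      (fun x : ℝ => Real.sqrt Real.pi / Real.sqrt c * erf (Real.sqrt c * Real.exp (x / 2)))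
      Filter.atTop (nhds (Real.sqrt Real.pi / Real.sqrt c)) := by
    simpa using herfc.const_mul (Real.sqrt Real.pi / Real.sqrt c)
  have int1 : IntegrableOn (fun x : ℝ => Real.exp (x / 2 - c * Real.exp x)) (Set.Ioi X) :=
    integrableOn_Ioi_deriv_of_nonneg' (fun x _ => hH x) (fun x _ => (Real.exp_pos _).le) hHlim
  have int2 : IntegrableOn (fun x : ℝ => Real.exp (x / 2 - c * Real.exp x) -
      (1 - 2 * Real.exp (x / 2) * dawson (Real.exp (x / 2))) * Real.exp (x / 2 - c * Real.exp x))
      (Set.Ioi X) := by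
    refine integrableOn_Ioi_deriv_of_nonneg' (g := fun x =>
      Real.sqrt Real.pi / Real.sqrt c * erf (Real.sqrt c * Real.exp (x / 2)) -
        (2 / (c + 1) * (Real.exp (-(c * Real.exp x)) * dawson (Real.exp (x / 2)))
          + Real.sqrt Real.pi * (Real.sqrt c / (c + 1)) * erf (Real.sqrt c * Real.exp (x / 2))))
      (fun x _ => (hH x).sub (hG x)) ?_ (hHlim.sub hGlim)
    intro x _
    have h1 : Real.exp (x / 2 - c * Real.exp x) -
        (1 - 2 * Real.exp (x / 2) * dawson (Real.exp (x / 2))) * Real.exp (x / 2 - c * Real.exp x)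
        = 2 * Real.exp (x / 2) * dawson (Real.exp (x / 2)) * Real.exp (x / 2 - c * Real.exp x) := by
      ring
    rw [h1]
    exact mul_nonneg (mul_nonneg (by positivity) (dawson_nonneg_s11 (Real.exp_pos _).le))
      (Real.exp_pos _).le
  have intf : IntegrableOn
      (fun x : ℝ => (1 - 2 * Real.exp (x / 2) * dawson (Real.exp (x / 2))) *
        Real.exp (x / 2 - c * Real.exp x)) (Set.Ioi X) := by
    have h := int1.sub int2
    exact h.congr (Filter.Eventually.of_forall fun x => by simp [Pi.sub_apply])
  refine ⟨intf, ?_⟩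
  have hint := integral_Ioi_of_hasDerivAt_of_tendsto' (fun x _ => hG x) intf hGlim
  rw [hint]
  unfold erfc
  ring
end

section
/- For every real a ≥ 0, writing z = a(√3 + i) ∈ ℂ, one has | F(z) | ≤ e^{−2a²} · (√π/2) · erf(a) + F(√3 · a), where F on the right-hand side denotes the real Dawson function. -/
/-- The complex Dawson function `F(z) = e^{−z²} · z · ∫₀¹ e^{t²z²} dt`. -/
noncomputable def cdawson (z : ℂ) : ℂ :=
  Complex.exp (-z ^ 2) * (z * ∫ t in (0 : ℝ)..1, Complex.exp ((t : ℂ) ^ 2 * z ^ 2))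

open MeasureTheory Metric intervalIntegral in

/-- Auxiliary entire function `E(z) = z ∫₀¹ e^{t²z²} dt = ∫₀ᶻ e^{w²} dw`. -/
noncomputable def Eaux (z : ℂ) : ℂ := z * ∫ t in (0 : ℝ)..1, Complex.exp ((t : ℂ) ^ 2 * z ^ 2)

lemma contAux (z : ℂ) : Continuous fun t : ℝ => Complex.exp ((t : ℂ) ^ 2 * z ^ 2) := by
  fun_prop

lemma contAux' (w : ℂ) :
    Continuous fun t : ℝ => 2 * (t : ℂ) ^ 2 * w * Complex.exp ((t : ℂ) ^ 2 * w ^ 2) := by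
  fun_prop

lemma hasDerivAt_inner (w : ℂ) :
    HasDerivAt (fun z : ℂ => ∫ t in (0 : ℝ)..1, Complex.exp ((t : ℂ) ^ 2 * z ^ 2))
      (∫ t in (0 : ℝ)..1, 2 * (t : ℂ) ^ 2 * w * Complex.exp ((t : ℂ) ^ 2 * w ^ 2)) w := by
  have key := intervalIntegral.hasDerivAt_integral_of_dominated_loc_of_deriv_le
    (F := fun (z : ℂ) (t : ℝ) => Complex.exp ((t : ℂ) ^ 2 * z ^ 2))
    (F' := fun (z : ℂ) (t : ℝ) => 2 * (t : ℂ) ^ 2 * z * Complex.exp ((t : ℂ) ^ 2 * z ^ 2))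
    (bound := fun _ => 2 * (‖w‖ + 1) * Real.exp ((‖w‖ + 1) ^ 2))
    (μ := MeasureTheory.volume) (a := 0) (b := 1) (x₀ := w) (Metric.ball_mem_nhds w one_pos)
    ?_ ?_ ?_ ?_ ?_ ?_
  · exact key.2
  · filter_upwards with x using (contAux x).aestronglyMeasurable
  · exact (contAux w).intervalIntegrable 0 1
  · exact (contAux' w).aestronglyMeasurable
  · filter_upwards with t ht x hx
    have ht' : t ∈ Set.Ioc (0 : ℝ) 1 := by
      simpa [Set.uIoc_of_le (zero_le_one)] using ht
    have ht2 : t ^ 2 ≤ 1 := by nlinarith [ht'.1, ht'.2]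
    have ht0 : 0 ≤ t ^ 2 := sq_nonneg t
    have hxw : ‖x‖ ≤ ‖w‖ + 1 := by
      have h1 : ‖x - w‖ < 1 := by simpa [Metric.mem_ball, dist_eq_norm] using hx
      have h2 : ‖x‖ ≤ ‖x - w‖ + ‖w‖ := by
        simpa using norm_add_le (x - w) w
      linarith
    have hw0 : (0:ℝ) ≤ ‖w‖ + 1 := by positivity
    have hre : ((t : ℂ) ^ 2 * x ^ 2).re = t ^ 2 * (x ^ 2).re := by
      have : ((t : ℂ) ^ 2 * x ^ 2) = ((t ^ 2 : ℝ) : ℂ) * x ^ 2 := by push_cast; ring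
      rw [this, Complex.re_ofReal_mul]
    have hre2 : (x ^ 2).re ≤ (‖w‖ + 1) ^ 2 := by
      calc (x ^ 2).re ≤ ‖x ^ 2‖ := Complex.re_le_norm _
        _ = ‖x‖ ^ 2 := by rw [norm_pow]
        _ ≤ (‖w‖ + 1) ^ 2 := by nlinarith [norm_nonneg x]
    have hre3 : t ^ 2 * (x ^ 2).re ≤ (‖w‖ + 1) ^ 2 := by
      rcases le_or_gt 0 ((x ^ 2).re) with h | h
      · nlinarith
      · nlinarith [sq_nonneg (‖w‖ + 1)]
    have hnorm : ‖2 * (t : ℂ) ^ 2 * x * Complex.exp ((t : ℂ) ^ 2 * x ^ 2)‖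
        = 2 * t ^ 2 * ‖x‖ * Real.exp (t ^ 2 * (x ^ 2).re) := by
      rw [norm_mul, Complex.norm_exp, hre]
      rw [norm_mul, norm_mul]
      simp [Complex.norm_real, sq_abs, abs_of_pos ht'.1]
    rw [hnorm]
    have : 2 * t ^ 2 * ‖x‖ * Real.exp (t ^ 2 * (x ^ 2).re)
        ≤ 2 * 1 * (‖w‖ + 1) * Real.exp ((‖w‖ + 1) ^ 2) := by
      gcongr
    linarith
  · exact intervalIntegrable_const
  · filter_upwards with t ht x hx
    have h1 : HasDerivAt (fun z : ℂ => (t : ℂ) ^ 2 * z ^ 2) ((t : ℂ) ^ 2 * (2 * x)) x := by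
      simpa using ((hasDerivAt_pow 2 x).const_mul ((t : ℂ) ^ 2))
    have := h1.cexp
    exact this.congr_deriv (by ring)

lemma hasDerivAt_Eaux (w : ℂ) : HasDerivAt Eaux (Complex.exp (w ^ 2)) w := by
  have h1 := hasDerivAt_inner w
  have h2 := (hasDerivAt_id w).mul h1
  have key : 1 * (∫ t in (0 : ℝ)..1, Complex.exp ((t : ℂ) ^ 2 * w ^ 2)) +
      w * ∫ t in (0 : ℝ)..1, 2 * (t : ℂ) ^ 2 * w * Complex.exp ((t : ℂ) ^ 2 * w ^ 2)
      = Complex.exp (w ^ 2) := by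
    rw [one_mul, ← intervalIntegral.integral_const_mul,
      ← intervalIntegral.integral_add ((contAux w).intervalIntegrable 0 1)
        (show IntervalIntegrable (fun t : ℝ => w * (2 * (t : ℂ) ^ 2 * w * Complex.exp ((t : ℂ) ^ 2 * w ^ 2))) _ 0 1 from (continuous_const.mul (contAux' w)).intervalIntegrable 0 1)]
    have hFTC : ∀ t ∈ Set.uIcc (0:ℝ) 1,
        HasDerivAt (fun t : ℝ => (t : ℂ) * Complex.exp ((t : ℂ) ^ 2 * w ^ 2))
          (Complex.exp ((t : ℂ) ^ 2 * w ^ 2) +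
            w * (2 * (t : ℂ) ^ 2 * w * Complex.exp ((t : ℂ) ^ 2 * w ^ 2))) t := by
      intro t _
      have hc : HasDerivAt (fun u : ℂ => u * Complex.exp (u ^ 2 * w ^ 2))
          (Complex.exp ((t:ℂ) ^ 2 * w ^ 2) +
            w * (2 * (t : ℂ) ^ 2 * w * Complex.exp ((t : ℂ) ^ 2 * w ^ 2))) (t : ℂ) := by
        have hp : HasDerivAt (fun u : ℂ => u ^ 2 * w ^ 2) ((2 * (t:ℂ)) * w ^ 2) (t : ℂ) := by
          simpa using ((hasDerivAt_pow 2 ((t:ℂ))).mul_const (w ^ 2))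
        have := (hasDerivAt_id ((t:ℂ))).mul hp.cexp
        exact this.congr_deriv (by simp only [id_eq]; ring)
      exact hc.comp_ofReal
    have := intervalIntegral.integral_eq_sub_of_hasDerivAt hFTC
      (((contAux w).add (continuous_const.mul (contAux' w))).intervalIntegrable 0 1)
    rw [this]
    norm_num
  rw [← key]
  exact h2

lemma Eaux_left (a : ℝ) :
    Eaux (Complex.I * a) = ∫ y in (0:ℝ)..a, Complex.I * Complex.exp (-(y:ℂ) ^ 2) := by
  have hFTC : ∀ y ∈ Set.uIcc (0:ℝ) a,
      HasDerivAt (fun y : ℝ => Eaux (Complex.I * y)) (Complex.I * Complex.exp (-(y:ℂ) ^ 2)) y := by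
    intro y _
    have hc : HasDerivAt (fun z : ℂ => Eaux (Complex.I * z))
        (Complex.I * Complex.exp (-(y:ℂ) ^ 2)) ((y:ℂ)) := by
      have hm : HasDerivAt (fun z : ℂ => Complex.I * z) Complex.I ((y:ℂ)) := by
        simpa using (hasDerivAt_id ((y:ℂ))).const_mul Complex.I
      have := (hasDerivAt_Eaux (Complex.I * y)).comp ((y:ℂ)) hm
      exact this.congr_deriv (by rw [mul_pow, Complex.I_sq]; ring)
    exact hc.comp_ofReal
  have hcont : Continuous fun y : ℝ => Complex.I * Complex.exp (-(y:ℂ) ^ 2) := by fun_prop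
  have := intervalIntegral.integral_eq_sub_of_hasDerivAt hFTC (hcont.intervalIntegrable 0 a)
  rw [this]
  simp [Eaux]

lemma Eaux_top (a b : ℝ) :
    Eaux ((b:ℂ) + Complex.I * a) - Eaux (Complex.I * a)
      = ∫ x in (0:ℝ)..b, Complex.exp (((x:ℂ) + Complex.I * a) ^ 2) := by
  have hFTC : ∀ x ∈ Set.uIcc (0:ℝ) b,
      HasDerivAt (fun x : ℝ => Eaux ((x:ℂ) + Complex.I * a))
        (Complex.exp (((x:ℂ) + Complex.I * a) ^ 2)) x := by
    intro x _
    have hc : HasDerivAt (fun z : ℂ => Eaux (z + Complex.I * a))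
        (Complex.exp (((x:ℂ) + Complex.I * a) ^ 2)) ((x:ℂ)) := by
      have hm : HasDerivAt (fun z : ℂ => z + Complex.I * a) 1 ((x:ℂ)) := by
        simpa using (hasDerivAt_id ((x:ℂ))).add_const (Complex.I * a)
      have := (hasDerivAt_Eaux ((x:ℂ) + Complex.I * a)).comp ((x:ℂ)) hm
      rw [mul_one] at this
      exact this
    exact hc.comp_ofReal
  have hcont : Continuous fun x : ℝ => Complex.exp (((x:ℂ) + Complex.I * a) ^ 2) := by fun_prop
  have := intervalIntegral.integral_eq_sub_of_hasDerivAt hFTC (hcont.intervalIntegrable 0 b)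
  rw [this]
  norm_num

/-- for `a ≥ 0` and `z = a(√3 + i)`,
`|F(z)| ≤ e^{−2a²} (√π/2) erf(a) + F(√3 a)`. -/
theorem cdawson_abs_bound (a : ℝ) (ha : 0 ≤ a) :
    ‖cdawson ((a : ℂ) * (Real.sqrt 3 + Complex.I))‖ ≤
      Real.exp (-2 * a ^ 2) * (Real.sqrt Real.pi / 2) * erf a + dawson (Real.sqrt 3 * a) := by
  set s := Real.sqrt 3 with hs_def
  have hs3 : s ^ 2 = 3 := Real.sq_sqrt (by norm_num)
  have hs0 : 0 ≤ s := Real.sqrt_nonneg 3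
  set z : ℂ := (a : ℂ) * (s + Complex.I) with hz_def
  have hz_eq : z = ((s * a : ℝ) : ℂ) + Complex.I * a := by
    rw [hz_def]; push_cast; ring
  -- decomposition of Eaux z
  have hdecomp : Eaux z = (∫ y in (0:ℝ)..a, Complex.I * Complex.exp (-(y:ℂ) ^ 2)) +
      ∫ x in (0:ℝ)..(s*a), Complex.exp (((x:ℂ) + Complex.I * a) ^ 2) := by
    rw [← Eaux_left a, ← Eaux_top a (s*a), ← hz_eq]
    ring
  -- cdawson z = exp(-z^2) * Eaux z
  have hcd : cdawson z = Complex.exp (-z ^ 2) * Eaux z := rfl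
  -- |exp(-z^2)| = exp(-2a^2)
  have hz2 : -z ^ 2 = ((-(2*a^2) : ℝ) : ℂ) + ((-(2*s*a^2) : ℝ) : ℂ) * Complex.I := by
    rw [hz_def]
    have hsC : ((s:ℂ)) ^ 2 = 3 := by norm_cast
    push_cast
    linear_combination (-(a:ℂ)^2) * hsC + (-(a:ℂ)^2) * Complex.I_sq
  have habs_exp : ‖Complex.exp (-z ^ 2)‖ = Real.exp (-(2*a^2)) := by
    rw [Complex.norm_exp, hz2]
    simp [← Complex.ofReal_pow]
  -- bound the two integrals
  have hint1 : ‖∫ y in (0:ℝ)..a, Complex.I * Complex.exp (-(y:ℂ) ^ 2)‖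
      ≤ ∫ y in (0:ℝ)..a, Real.exp (-y^2) := by
    apply le_trans (intervalIntegral.norm_integral_le_integral_norm ha)
    apply le_of_eq
    apply intervalIntegral.integral_congr
    intro y _
    show ‖Complex.I * Complex.exp (-(y:ℂ) ^ 2)‖ = Real.exp (-y ^ 2)
    have hy : (-(y:ℂ) ^ 2) = ((-(y^2) : ℝ) : ℂ) := by push_cast; ring
    rw [hy]
    simp [Complex.norm_exp, ← Complex.ofReal_pow]
  have hint2 : ‖∫ x in (0:ℝ)..(s*a), Complex.exp (((x:ℂ) + Complex.I * a) ^ 2)‖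
      ≤ Real.exp (-a^2) * ∫ x in (0:ℝ)..(s*a), Real.exp (x^2) := by
    apply le_trans (intervalIntegral.norm_integral_le_integral_norm (by positivity))
    rw [← intervalIntegral.integral_const_mul]
    apply le_of_eq
    apply intervalIntegral.integral_congr
    intro x _
    show ‖Complex.exp (((x:ℂ) + Complex.I * a) ^ 2)‖ = Real.exp (-a^2) * Real.exp (x^2)
    simp only [Complex.norm_exp]
    have hre : (((x:ℂ) + Complex.I * a) ^ 2).re = x^2 - a^2 := by
      have : ((x:ℂ) + Complex.I * a) ^ 2
          = ((x^2 - a^2 : ℝ) : ℂ) + ((2*x*a : ℝ) : ℂ) * Complex.I := by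
        push_cast
        linear_combination ((a:ℂ)^2) * Complex.I_sq
      rw [this]
      simp [← Complex.ofReal_pow]
    rw [hre, ← Real.exp_add]
    ring_nf
  -- assemble
  have hEbound : ‖Eaux z‖ ≤ (∫ y in (0:ℝ)..a, Real.exp (-y^2)) +
      Real.exp (-a^2) * ∫ x in (0:ℝ)..(s*a), Real.exp (x^2) := by
    rw [hdecomp]
    exact le_trans (norm_add_le _ _) (add_le_add hint1 hint2)
  have hmain : ‖cdawson z‖ ≤ Real.exp (-(2*a^2)) *
      ((∫ y in (0:ℝ)..a, Real.exp (-y^2)) +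
        Real.exp (-a^2) * ∫ x in (0:ℝ)..(s*a), Real.exp (x^2)) := by
    rw [hcd, norm_mul, habs_exp]
    exact mul_le_mul_of_nonneg_left hEbound (Real.exp_nonneg _)
  -- rewrite RHS
  have hpi : Real.sqrt Real.pi ≠ 0 := by
    positivity
  have herf : Real.exp (-2 * a ^ 2) * (Real.sqrt Real.pi / 2) * erf a
      = Real.exp (-(2*a^2)) * ∫ y in (0:ℝ)..a, Real.exp (-y^2) := by
    rw [erf]
    field_simp
  have hdaw : dawson (s * a) = Real.exp (-(2*a^2)) *
      (Real.exp (-a^2) * ∫ x in (0:ℝ)..(s*a), Real.exp (x^2)) := by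
    rw [dawson, ← mul_assoc, ← Real.exp_add]
    congr 1
    congr 1
    rw [mul_pow, hs3]
    ring
  rw [herf, hdaw, ← mul_add]
  exact hmain
end

section
/- For every real a ≥ 0 and z = a(√3 + i) or z = a(√3 − i) in ℂ, one has | 1 − 2 z F(z) | ≤ 1 + 2√π · a · e^{−2a²} · erf(a) + 4 a · F(√3 · a), where F on the right-hand side denotes the real Dawson function. In particular, | 1 − 2 z F(z) | is bounded uniformly in a ≥ 0. -/
open MeasureTheory intervalIntegral Metric

noncomputable def phi (w : ℂ) : ℂ := w * ∫ t in (0:ℝ)..1, Complex.exp ((t : ℂ) ^ 2 * w ^ 2)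

lemma phi_hasDerivAt (z : ℂ) : HasDerivAt phi (Complex.exp (z ^ 2)) z := by
  have hF'der : ∀ (t : ℝ) (x : ℂ),
      HasDerivAt (fun w : ℂ => w * Complex.exp ((t : ℂ) ^ 2 * w ^ 2))
        ((1 + 2 * (t : ℂ) ^ 2 * x ^ 2) * Complex.exp ((t : ℂ) ^ 2 * x ^ 2)) x := by
    intro t x
    have h1 : HasDerivAt (fun w : ℂ => (t : ℂ) ^ 2 * w ^ 2) ((t : ℂ) ^ 2 * (2 * x)) x := by
      simpa using ((hasDerivAt_pow 2 x).const_mul ((t : ℂ) ^ 2))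
    have h3 := (hasDerivAt_id x).mul h1.cexp
    simp only [id_eq] at h3
    exact h3.congr_deriv (by ring)
  set R : ℝ := ‖z‖ + 1 with hR
  have hRpos : 0 < R := by positivity
  have key := intervalIntegral.hasDerivAt_integral_of_dominated_loc_of_deriv_le
    (F := fun (w : ℂ) (t : ℝ) => w * Complex.exp ((t : ℂ) ^ 2 * w ^ 2))
    (F' := fun (w : ℂ) (t : ℝ) => (1 + 2 * (t : ℂ) ^ 2 * w ^ 2) * Complex.exp ((t : ℂ) ^ 2 * w ^ 2))
    (x₀ := z) (a := (0:ℝ)) (b := (1:ℝ)) (μ := volume)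
    (bound := fun _ => (1 + 2 * R ^ 2) * Real.exp (R ^ 2))
    (s := ball z 1) (ball_mem_nhds z one_pos)
    (Filter.Eventually.of_forall fun x => by
      exact (Continuous.aestronglyMeasurable (by fun_prop)))
    (Continuous.intervalIntegrable (by fun_prop) _ _)
    ((Continuous.aestronglyMeasurable (by fun_prop)))
    (Filter.Eventually.of_forall fun t => by
      intro ht x hx
      have hxR : ‖x‖ ≤ R := by
        have h1 := mem_ball_iff_norm.mp hx
        have h2 : ‖x‖ - ‖z‖ ≤ ‖x - z‖ := norm_sub_norm_le x z
        linarith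
      have ht' : t ∈ Set.Ioc (0:ℝ) 1 := by
        rwa [Set.uIoc_of_le (by norm_num : (0:ℝ) ≤ 1)] at ht
      have ht2 : t ^ 2 ≤ 1 := by nlinarith [ht'.1, ht'.2]
      have hx2 : ‖x‖ ^ 2 ≤ R ^ 2 :=
        pow_le_pow_left₀ (norm_nonneg x) hxR 2
      have habs : ‖(t : ℂ) ^ 2 * x ^ 2‖ ≤ R ^ 2 := by
        rw [norm_mul, norm_pow, norm_pow]
        simp only [Complex.norm_real, Real.norm_eq_abs]
        calc |t| ^ 2 * ‖x‖ ^ 2 ≤ 1 * R ^ 2 := by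
              apply mul_le_mul
              · rwa [sq_abs]
              · exact hx2
              · positivity
              · norm_num
          _ = R ^ 2 := by ring
      rw [norm_mul]
      apply mul_le_mul
      · calc ‖1 + 2 * (t : ℂ) ^ 2 * x ^ 2‖ ≤ ‖(1:ℂ)‖ + ‖2 * (t : ℂ) ^ 2 * x ^ 2‖ := norm_add_le _ _
          _ ≤ 1 + 2 * R ^ 2 := by
            simp only [norm_one, norm_mul, norm_pow, Complex.norm_real, Real.norm_eq_abs,
              Complex.norm_two]
            nlinarith [sq_abs t, ht2, hx2, sq_nonneg (‖x‖)]
      · rw [Complex.norm_exp]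
        apply Real.exp_le_exp.mpr
        exact le_trans (Complex.re_le_norm _) habs
      · positivity
      · positivity)
    (Continuous.intervalIntegrable continuous_const _ _)
    (Filter.Eventually.of_forall fun t => fun _ x _ => hF'der t x)
  have hder := key.2
  have heq : (fun w : ℂ => ∫ t in (0:ℝ)..1, w * Complex.exp ((t : ℂ) ^ 2 * w ^ 2)) = phi := by
    funext w
    exact intervalIntegral.integral_const_mul w _
  rw [heq] at hder
  have hval : (∫ t in (0:ℝ)..1, (1 + 2 * (t : ℂ) ^ 2 * z ^ 2) * Complex.exp ((t : ℂ) ^ 2 * z ^ 2))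
      = Complex.exp (z ^ 2) := by
    have hFTC : ∀ t ∈ Set.uIcc (0:ℝ) 1,
        HasDerivAt (fun s : ℝ => (s : ℂ) * Complex.exp ((s : ℂ) ^ 2 * z ^ 2))
          ((1 + 2 * (t : ℂ) ^ 2 * z ^ 2) * Complex.exp ((t : ℂ) ^ 2 * z ^ 2)) t := by
      intro t _
      have hcast : HasDerivAt (fun s : ℝ => (s : ℂ)) 1 t := by
        exact Complex.ofRealCLM.hasDerivAt (x := t)
      have hfun : (fun s : ℝ => (s:ℂ) ^ 2 * z ^ 2) = fun s : ℝ => ((s:ℂ) * (s:ℂ)) * z ^ 2 := by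
        funext s; ring
      have h1 : HasDerivAt (fun s : ℝ => (s : ℂ) ^ 2 * z ^ 2) (2 * (t:ℂ) * z ^ 2) t := by
        rw [hfun]
        have := (hcast.mul hcast).mul_const (z ^ 2)
        exact this.congr_deriv (by ring)
      have h3 := hcast.mul h1.cexp
      exact h3.congr_deriv (by ring)
    have := intervalIntegral.integral_eq_sub_of_hasDerivAt hFTC
      (Continuous.intervalIntegrable (by fun_prop) _ _)
    rw [this]
    norm_num
  rw [hval] at hder
  exact hder

lemma hcastDeriv (t : ℝ) : HasDerivAt (fun s : ℝ => (s : ℂ)) 1 t := by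
  exact Complex.ofRealCLM.hasDerivAt (x := t)

lemma phi_decomp (a ε : ℝ) (hε : ε ^ 2 = 1) :
    phi ((Real.sqrt 3 * a : ℝ) + (ε : ℂ) * a * Complex.I) =
      (∫ s in (0:ℝ)..a, ((ε : ℂ) * Complex.I) * Complex.exp (-(s : ℂ) ^ 2)) +
        ∫ x in (0:ℝ)..(Real.sqrt 3 * a), Complex.exp (((x : ℂ) + (ε : ℂ) * a * Complex.I) ^ 2) := by
  have hvertderiv : ∀ s : ℝ, HasDerivAt (fun s : ℝ => phi ((ε : ℂ) * s * Complex.I))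
      (((ε : ℂ) * Complex.I) * Complex.exp (-(s : ℂ) ^ 2)) s := by
    intro s
    have hin : HasDerivAt (fun s : ℝ => (ε : ℂ) * s * Complex.I) ((ε : ℂ) * Complex.I) s := by
      have := ((hcastDeriv s).const_mul (ε : ℂ)).mul_const Complex.I
      simpa using this
    have := HasDerivAt.scomp (𝕜 := ℝ) (𝕜' := ℂ) s
      (phi_hasDerivAt (((ε : ℂ) * s * Complex.I))) hin
    have harg : ((ε : ℂ) * s * Complex.I) ^ 2 = -(s : ℂ) ^ 2 := by
      have hε' : ((ε : ℂ)) ^ 2 = 1 := by exact_mod_cast hε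
      rw [mul_pow, mul_pow, Complex.I_sq, hε']; ring
    rw [harg] at this
    simpa [smul_eq_mul, mul_comm, Function.comp_def] using this
  have hvert : (∫ s in (0:ℝ)..a, ((ε : ℂ) * Complex.I) * Complex.exp (-(s : ℂ) ^ 2)) =
      phi ((ε : ℂ) * a * Complex.I) := by
    have := intervalIntegral.integral_eq_sub_of_hasDerivAt (a := (0:ℝ)) (b := a)
      (fun s _ => hvertderiv s) (Continuous.intervalIntegrable (by fun_prop) _ _)
    rw [this]
    simp [phi]
  have hhorizderiv : ∀ x : ℝ, HasDerivAt (fun x : ℝ => phi ((x : ℂ) + (ε : ℂ) * a * Complex.I))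
      (Complex.exp (((x : ℂ) + (ε : ℂ) * a * Complex.I) ^ 2)) x := by
    intro x
    have hin : HasDerivAt (fun x : ℝ => (x : ℂ) + (ε : ℂ) * a * Complex.I) 1 x :=
      (hcastDeriv x).add_const _
    have := HasDerivAt.scomp (𝕜 := ℝ) (𝕜' := ℂ) x
      (phi_hasDerivAt ((x : ℂ) + (ε : ℂ) * a * Complex.I)) hin
    simpa [Function.comp_def] using this
  have hhoriz : (∫ x in (0:ℝ)..(Real.sqrt 3 * a),
      Complex.exp (((x : ℂ) + (ε : ℂ) * a * Complex.I) ^ 2)) =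
      phi ((Real.sqrt 3 * a : ℝ) + (ε : ℂ) * a * Complex.I) - phi ((ε : ℂ) * a * Complex.I) := by
    have := intervalIntegral.integral_eq_sub_of_hasDerivAt (a := (0:ℝ)) (b := Real.sqrt 3 * a)
      (fun x _ => hhorizderiv x) (Continuous.intervalIntegrable (by fun_prop) _ _)
    rw [this]
    norm_num
  rw [hvert, hhoriz]
  ring

lemma phi_abs_le (a ε : ℝ) (ha : 0 ≤ a) (hε : ε = 1 ∨ ε = -1) :
    ‖phi ((Real.sqrt 3 * a : ℝ) + (ε : ℂ) * a * Complex.I)‖ ≤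
      (∫ s in (0:ℝ)..a, Real.exp (-s ^ 2)) +
        Real.exp (-a ^ 2) * ∫ x in (0:ℝ)..(Real.sqrt 3 * a), Real.exp (x ^ 2) := by
  have hε2 : ε ^ 2 = 1 := by rcases hε with h | h <;> rw [h] <;> norm_num
  have hεabs : |ε| = 1 := by rcases hε with h | h <;> rw [h] <;> norm_num
  rw [phi_decomp a ε hε2]
  refine le_trans (norm_add_le _ _) (add_le_add ?_ ?_)
  · calc ‖∫ s in (0:ℝ)..a, ((ε : ℂ) * Complex.I) * Complex.exp (-(s : ℂ) ^ 2)‖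
        ≤ ∫ s in (0:ℝ)..a, ‖((ε : ℂ) * Complex.I) * Complex.exp (-(s : ℂ) ^ 2)‖ := by
          simpa using intervalIntegral.norm_integral_le_integral_norm (μ := volume)
            (f := fun s : ℝ => ((ε : ℂ) * Complex.I) * Complex.exp (-(s : ℂ) ^ 2)) ha
      _ = ∫ s in (0:ℝ)..a, Real.exp (-s ^ 2) := by
          apply intervalIntegral.integral_congr
          intro s _
          dsimp only
          have h0 : (-(s : ℂ) ^ 2) = ((-s ^ 2 : ℝ) : ℂ) := by push_cast; ring
          rw [h0]
          simp only [norm_mul, map_mul, Complex.norm_real, Real.norm_eq_abs, Complex.norm_I,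
            Complex.norm_exp, Complex.ofReal_re, hεabs]
          ring
  · calc ‖∫ x in (0:ℝ)..(Real.sqrt 3 * a),
          Complex.exp (((x : ℂ) + (ε : ℂ) * a * Complex.I) ^ 2)‖
        ≤ ∫ x in (0:ℝ)..(Real.sqrt 3 * a), ‖Complex.exp (((x : ℂ) + (ε : ℂ) * a * Complex.I) ^ 2)‖ := by
          simpa using intervalIntegral.norm_integral_le_integral_norm (μ := volume)
            (f := fun x : ℝ => Complex.exp (((x : ℂ) + (ε : ℂ) * a * Complex.I) ^ 2))
            (by positivity : (0:ℝ) ≤ Real.sqrt 3 * a)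
      _ = ∫ x in (0:ℝ)..(Real.sqrt 3 * a), Real.exp (-a ^ 2) * Real.exp (x ^ 2) := by
          apply intervalIntegral.integral_congr
          intro x _
          have hre : (((x : ℂ) + (ε : ℂ) * a * Complex.I) ^ 2).re = x ^ 2 - a ^ 2 := by
            have hsq : ((x : ℂ) + (ε : ℂ) * a * Complex.I) ^ 2 =
                ((x ^ 2 - ε ^ 2 * a ^ 2 : ℝ) : ℂ) + ((2 * x * ε * a : ℝ) : ℂ) * Complex.I := by
              push_cast
              linear_combination ((ε : ℂ) * a) ^ 2 * Complex.I_sq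
            rw [hsq]
            simp only [Complex.add_re, Complex.mul_re, Complex.I_re, Complex.I_im,
              Complex.ofReal_re, Complex.ofReal_im]
            rw [hε2]
            ring
          dsimp only
          rw [Complex.norm_exp, hre, ← Real.exp_add]
          congr 1
          ring
      _ = Real.exp (-a ^ 2) * ∫ x in (0:ℝ)..(Real.sqrt 3 * a), Real.exp (x ^ 2) :=
          intervalIntegral.integral_const_mul _ _

lemma main_bound (a : ℝ) (ha : 0 ≤ a) (z : ℂ)
    (hz : z = (a : ℂ) * (Real.sqrt 3 + Complex.I) ∨
      z = (a : ℂ) * (Real.sqrt 3 - Complex.I)) :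
    ‖1 - 2 * z * cdawson z‖ ≤
      1 + 2 * Real.sqrt Real.pi * a * Real.exp (-2 * a ^ 2) * erf a
        + 4 * a * dawson (Real.sqrt 3 * a) := by
  obtain ⟨ε, hε, hzeq⟩ : ∃ ε : ℝ, (ε = 1 ∨ ε = -1) ∧
      z = ((Real.sqrt 3 * a : ℝ) : ℂ) + (ε : ℂ) * a * Complex.I := by
    rcases hz with h | h
    · exact ⟨1, Or.inl rfl, by rw [h]; push_cast; ring⟩
    · exact ⟨-1, Or.inr rfl, by rw [h]; push_cast; ring⟩
  have hε2 : ε ^ 2 = 1 := by rcases hε with h | h <;> rw [h] <;> norm_num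
  have h3 : Real.sqrt 3 * Real.sqrt 3 = 3 := Real.mul_self_sqrt (by norm_num)
  have hre : z.re = Real.sqrt 3 * a := by rw [hzeq]; simp
  have him : z.im = ε * a := by rw [hzeq]; simp
  set V : ℝ := ∫ s in (0:ℝ)..a, Real.exp (-s ^ 2) with hV
  set H : ℝ := ∫ x in (0:ℝ)..(Real.sqrt 3 * a), Real.exp (x ^ 2) with hH
  have habsz : ‖z‖ = 2 * a := by
    rw [Complex.norm_def, Complex.normSq_apply, hre, him]
    have hq : Real.sqrt 3 * a * (Real.sqrt 3 * a) + ε * a * (ε * a) = (2 * a) ^ 2 := by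
      have hεε : ε * ε = 1 := by rw [← sq]; exact hε2
      linear_combination a ^ 2 * h3 + a ^ 2 * hεε
    rw [hq, Real.sqrt_sq (by positivity)]
  have habse : ‖Complex.exp (-z ^ 2)‖ = Real.exp (-(2 * a ^ 2)) := by
    rw [Complex.norm_exp]
    congr 1
    have hz2 : (z ^ 2).re = 2 * a ^ 2 := by
      rw [sq, Complex.mul_re, hre, him]
      have hεε : ε * ε = 1 := by rw [← sq]; exact hε2
      linear_combination a ^ 2 * h3 - a ^ 2 * hεε
    rw [Complex.neg_re, hz2]
  have hphile : ‖phi z‖ ≤ V + Real.exp (-a ^ 2) * H := by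
    rw [hzeq]; exact phi_abs_le a ε ha hε
  have h1 : ‖1 - 2 * z * cdawson z‖ ≤ 1 + ‖2 * z * cdawson z‖ := by
    simpa using norm_sub_le (1 : ℂ) (2 * z * cdawson z)
  have hcd : cdawson z = Complex.exp (-z ^ 2) * phi z := rfl
  have h2 : ‖2 * z * cdawson z‖ =
      4 * a * (Real.exp (-(2 * a ^ 2)) * ‖phi z‖) := by
    rw [hcd, norm_mul, norm_mul, norm_mul, habsz, habse, Complex.norm_two]
    ring
  have h4 : ‖2 * z * cdawson z‖ ≤
      4 * a * Real.exp (-(2 * a ^ 2)) * V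
        + 4 * a * (Real.exp (-(2 * a ^ 2)) * Real.exp (-a ^ 2)) * H := by
    rw [h2]
    have hfac : (0:ℝ) ≤ 4 * a * Real.exp (-(2 * a ^ 2)) := by positivity
    calc 4 * a * (Real.exp (-(2 * a ^ 2)) * ‖phi z‖)
        = 4 * a * Real.exp (-(2 * a ^ 2)) * ‖phi z‖ := by ring
      _ ≤ 4 * a * Real.exp (-(2 * a ^ 2)) * (V + Real.exp (-a ^ 2) * H) :=
          mul_le_mul_of_nonneg_left hphile hfac
      _ = 4 * a * Real.exp (-(2 * a ^ 2)) * V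
          + 4 * a * (Real.exp (-(2 * a ^ 2)) * Real.exp (-a ^ 2)) * H := by ring
  have hRHS : 1 + 2 * Real.sqrt Real.pi * a * Real.exp (-2 * a ^ 2) * erf a
      + 4 * a * dawson (Real.sqrt 3 * a)
      = 1 + 4 * a * Real.exp (-(2 * a ^ 2)) * V
        + 4 * a * (Real.exp (-(2 * a ^ 2)) * Real.exp (-a ^ 2)) * H := by
    rw [erf, dawson, ← hV]
    have hπ : Real.sqrt Real.pi ≠ 0 := ne_of_gt (Real.sqrt_pos.mpr Real.pi_pos)
    have h3a : -(Real.sqrt 3 * a) ^ 2 = -(3 * a ^ 2) := by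
      rw [mul_pow, Real.sq_sqrt (by norm_num : (0:ℝ) ≤ 3)]
    rw [h3a, ← hH]
    have he1 : Real.exp (-2 * a ^ 2) = Real.exp (-(2 * a ^ 2)) := by norm_num
    have he3 : Real.exp (-(3 * a ^ 2)) = Real.exp (-(2 * a ^ 2)) * Real.exp (-a ^ 2) := by
      rw [← Real.exp_add]; congr 1; ring
    rw [he1, he3]
    field_simp
    ring
  rw [hRHS]
  linarith [h1, h4]

lemma int_exp_sq_le (y : ℝ) (hy : 0 < y) :
    (∫ x in (0:ℝ)..y, Real.exp (x ^ 2)) ≤ Real.exp (y ^ 2) / y := by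
  have mono : (∫ x in (0:ℝ)..y, Real.exp (x ^ 2)) ≤ ∫ x in (0:ℝ)..y, Real.exp (x * y) := by
    apply intervalIntegral.integral_mono_on hy.le
      (Continuous.intervalIntegrable (by fun_prop) _ _)
      (Continuous.intervalIntegrable (by fun_prop) _ _)
    intro x hx
    apply Real.exp_le_exp.mpr
    nlinarith [hx.1, hx.2]
  have hval : (∫ x in (0:ℝ)..y, Real.exp (x * y)) = (Real.exp (y ^ 2) - 1) / y := by
    have hder : ∀ x ∈ Set.uIcc (0:ℝ) y,
        HasDerivAt (fun x : ℝ => Real.exp (x * y) / y) (Real.exp (x * y)) x := by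
      intro x _
      have h1 : HasDerivAt (fun x : ℝ => x * y) y x := by
        simpa using (hasDerivAt_id x).mul_const y
      have := (h1.exp).div_const y
      exact this.congr_deriv (by field_simp)
    rw [intervalIntegral.integral_eq_sub_of_hasDerivAt hder
      (Continuous.intervalIntegrable (by fun_prop) _ _)]
    rw [← sq]
    simp [Real.exp_zero]
    ring
  calc (∫ x in (0:ℝ)..y, Real.exp (x ^ 2)) ≤ (Real.exp (y ^ 2) - 1) / y := by
        rw [← hval]; exact mono
    _ ≤ Real.exp (y ^ 2) / y := by
        gcongr
        linarith

/-- for `a ≥ 0` and `z = a(√3 ± i)`,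
`|1 − 2zF(z)| ≤ 1 + 2√π a e^{−2a²} erf(a) + 4a F(√3 a)`; in particular `|1 − 2zF(z)|` is
bounded uniformly in `a ≥ 0`. -/
theorem cdawson_deriv_abs_bound :
    (∀ a : ℝ, 0 ≤ a → ∀ z : ℂ,
        (z = (a : ℂ) * (Real.sqrt 3 + Complex.I) ∨
          z = (a : ℂ) * (Real.sqrt 3 - Complex.I)) →
        ‖1 - 2 * z * cdawson z‖ ≤
          1 + 2 * Real.sqrt Real.pi * a * Real.exp (-2 * a ^ 2) * erf a
            + 4 * a * dawson (Real.sqrt 3 * a)) ∧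
    ∃ C : ℝ, ∀ a : ℝ, 0 ≤ a → ∀ z : ℂ,
        (z = (a : ℂ) * (Real.sqrt 3 + Complex.I) ∨
          z = (a : ℂ) * (Real.sqrt 3 - Complex.I)) →
        ‖1 - 2 * z * cdawson z‖ ≤ C := by
  refine ⟨main_bound, 6, fun a ha z hz => ?_⟩
  refine le_trans (main_bound a ha z hz) ?_
  have hπ : (0:ℝ) < Real.sqrt Real.pi := Real.sqrt_pos.mpr Real.pi_pos
  -- term 1 bound
  have hV0 : (0:ℝ) ≤ ∫ s in (0:ℝ)..a, Real.exp (-s ^ 2) :=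
    intervalIntegral.integral_nonneg ha (fun s _ => (Real.exp_pos _).le)
  have hVa : (∫ s in (0:ℝ)..a, Real.exp (-s ^ 2)) ≤ a := by
    calc (∫ s in (0:ℝ)..a, Real.exp (-s ^ 2)) ≤ ∫ _ in (0:ℝ)..a, (1:ℝ) := by
          apply intervalIntegral.integral_mono_on ha
            (Continuous.intervalIntegrable (by fun_prop) _ _)
            (Continuous.intervalIntegrable (by fun_prop) _ _)
          intro s _
          rw [← Real.exp_zero]
          apply Real.exp_le_exp.mpr
          nlinarith [sq_nonneg s]
      _ = a := by simp
  have hterm1 : 2 * Real.sqrt Real.pi * a * Real.exp (-2 * a ^ 2) * erf a ≤ 2 := by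
    rw [erf]
    have hee : Real.exp (-2 * a ^ 2) * Real.exp (2 * a ^ 2) = 1 := by
      rw [← Real.exp_add]; norm_num
    have h1 : 2 * Real.sqrt Real.pi * a * Real.exp (-2 * a ^ 2) *
        (2 / Real.sqrt Real.pi * ∫ s in (0:ℝ)..a, Real.exp (-s ^ 2))
        = 4 * a * Real.exp (-2 * a ^ 2) * ∫ s in (0:ℝ)..a, Real.exp (-s ^ 2) := by
      field_simp
      ring
    rw [h1]
    have h2 : 4 * a * Real.exp (-2 * a ^ 2) * (∫ s in (0:ℝ)..a, Real.exp (-s ^ 2))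
        ≤ 4 * a * Real.exp (-2 * a ^ 2) * a :=
      mul_le_mul_of_nonneg_left hVa (by positivity)
    refine h2.trans ?_
    nlinarith [Real.add_one_le_exp (2 * a ^ 2), Real.exp_pos (-2 * a ^ 2), hee, sq_nonneg a]
  -- term 2 bound
  have hterm2 : 4 * a * dawson (Real.sqrt 3 * a) ≤ 3 := by
    rcases eq_or_lt_of_le ha with h | h
    · rw [← h]; simp [dawson]
    · have hy : (0:ℝ) < Real.sqrt 3 * a := by positivity
      have hH : (∫ x in (0:ℝ)..(Real.sqrt 3 * a), Real.exp (x ^ 2))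
          ≤ Real.exp ((Real.sqrt 3 * a) ^ 2) / (Real.sqrt 3 * a) := int_exp_sq_le _ hy
      have h3a : (Real.sqrt 3 * a) ^ 2 = 3 * a ^ 2 := by
        rw [mul_pow, Real.sq_sqrt (by norm_num : (0:ℝ) ≤ 3)]
      have hd : dawson (Real.sqrt 3 * a) ≤ 1 / (Real.sqrt 3 * a) := by
        rw [dawson]
        calc Real.exp (-(Real.sqrt 3 * a) ^ 2) * ∫ x in (0:ℝ)..(Real.sqrt 3 * a), Real.exp (x ^ 2)
            ≤ Real.exp (-(Real.sqrt 3 * a) ^ 2) *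
              (Real.exp ((Real.sqrt 3 * a) ^ 2) / (Real.sqrt 3 * a)) :=
              mul_le_mul_of_nonneg_left hH (Real.exp_pos _).le
          _ = 1 / (Real.sqrt 3 * a) := by
              rw [div_eq_mul_inv, ← mul_assoc, ← Real.exp_add]
              norm_num
      have hs3 : (0:ℝ) < Real.sqrt 3 := Real.sqrt_pos.mpr (by norm_num)
      calc 4 * a * dawson (Real.sqrt 3 * a) ≤ 4 * a * (1 / (Real.sqrt 3 * a)) :=
            mul_le_mul_of_nonneg_left hd (by positivity)
        _ = 4 / Real.sqrt 3 := by field_simp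
        _ ≤ 3 := by
            rw [div_le_iff₀ hs3]
            nlinarith [Real.sq_sqrt (show (0:ℝ) ≤ 3 by norm_num), hs3]
  linarith
end
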